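/- arXiv:2008.07250 — 3 statements merged into one kernel-verified Lean document; each statement's English description precedes it below -/
import Mathlib

section
/- Fix n ≥ 2. If two homothety classes x₁ and x₂ of R-lattices in K^n have equal prints, 𝒫(x₁) = 𝒫(x₂), then x₁ = x₂. -/
namespace LGR

open Pointwise
open scoped Classical

variable (R : Type*) [CommRing R] (K : Type*) [Field K] [Algebra R K]

instance : SMulCommClass K R K :=
  ⟨fun c r x => by simp only [Algebra.smul_def, smul_eq_mul]; ring⟩

variable (n : ℕ)

/-- An `R`-lattice in `K^n`. -/
def IsLattice (L : Submodule R (Fin n → K)) : Prop :=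
  L.FG ∧ Submodule.span K (L : Set (Fin n → K)) = ⊤

/-- Homothety of lattices. -/
def Homothetic (L L' : Submodule R (Fin n → K)) : Prop :=
  ∃ c : K, c ≠ 0 ∧ L' = c • L

/-- Adjacency of homothety classes. -/
def AdjacentL (π : R) (L M : Submodule R (Fin n → K)) : Prop :=
  ¬ Homothetic R K n L M ∧
  ∃ L₁ L₂ : Submodule R (Fin n → K), Homothetic R K n L L₁ ∧ Homothetic R K n M L₂ ∧
    (algebraMap R K π) • L₁ ≤ L₂ ∧ L₂ ≤ L₁

/-- The type of a lattice: residue mod `n` of `v (det M)`, for `M` a matrix whose columns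
form an `R`-basis of `L`. -/
noncomputable def typeOf (v : K → ℤ) (L : Submodule R (Fin n → K)) : ZMod n :=
  if h : Nonempty (Module.Basis (Fin n) R L) then
    ((v (Matrix.det (Matrix.of fun i j => (h.some j : Fin n → K) i)) : ℤ) : ZMod n)
  else 0

/-- `v` is the discrete valuation on `K` with valuation ring `R` and `v π = 1`. -/
def IsDVal (v : K → ℤ) (π : R) : Prop :=
  (∀ x y : K, x ≠ 0 → y ≠ 0 → v (x * y) = v x + v y) ∧
  v (algebraMap R K π) = 1 ∧
  ∀ x : K, x ≠ 0 → (0 ≤ v x ↔ ∃ r : R, algebraMap R K r = x)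

/-- The print of the homothety class of a lattice, as a homothety-saturated set of lattices. -/
def PrintS (v : K → ℤ) (π : R) (L : Submodule R (Fin n → K)) :
    Set (Submodule R (Fin n → K)) :=
  {M | IsLattice R K n M ∧ typeOf R K n v M = 0 ∧
    (Homothetic R K n M L ∨ AdjacentL R K n π M L)}

/-- The action of `SL_n(K)` on lattices. -/
noncomputable def mapLat (g : Matrix.SpecialLinearGroup (Fin n) K)
    (L : Submodule R (Fin n → K)) : Submodule R (Fin n → K) :=
  L.map (((Matrix.SpecialLinearGroup.toLin' g).toLinearMap).restrictScalars R)

set_option linter.unusedSectionVars false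

section Aux

variable {R : Type*} [CommRing R] [IsDomain R] [IsDiscreteValuationRing R]
  {K : Type*} [Field K] [Algebra R K] [IsFractionRing R K]
  {n : ℕ} {π : R} {v : K → ℤ}

lemma algebraMap_ne_zero {r : R} (hr : r ≠ 0) : algebraMap R K r ≠ 0 :=
  (map_ne_zero_iff _ (IsFractionRing.injective R K)).mpr hr

section Val

variable (hv : IsDVal R K v π)
include hv

lemma v_one : v 1 = 0 := by
  have := hv.1 1 1 one_ne_zero one_ne_zero
  simp at this; omega

lemma v_inv {x : K} (hx : x ≠ 0) : v x⁻¹ = - v x := by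
  have := hv.1 x x⁻¹ hx (inv_ne_zero hx)
  rw [mul_inv_cancel₀ hx, v_one hv] at this; omega

lemma v_pow {x : K} (hx : x ≠ 0) (m : ℕ) : v (x ^ m) = m * v x := by
  induction m with
  | zero => simpa using v_one hv
  | succ m ih =>
    rw [pow_succ, hv.1 _ _ (pow_ne_zero _ hx) hx, ih]; push_cast; ring

lemma v_zpow {x : K} (hx : x ≠ 0) (k : ℤ) : v (x ^ k) = k * v x := by
  rcases k with m | m
  · simpa using v_pow hv hx m
  · have h2 := v_pow hv hx (m+1)
    have h1 := v_inv hv (pow_ne_zero (m+1) hx)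
    rw [zpow_negSucc, h1, h2, Int.negSucc_eq]
    push_cast; ring

lemma v_algebraMap_nonneg {r : R} (hr : r ≠ 0) : 0 ≤ v (algebraMap R K r) :=
  (hv.2.2 _ (algebraMap_ne_zero hr)).mpr ⟨r, rfl⟩

lemma v_isUnit {r : R} (hu : IsUnit r) : v (algebraMap R K r) = 0 := by
  obtain ⟨u, rfl⟩ := hu
  have h1 : (u : R) ≠ 0 := u.ne_zero
  have h2 : ((u⁻¹ : Rˣ) : R) ≠ 0 := Units.ne_zero _
  have := hv.1 _ _ (algebraMap_ne_zero (K := K) h1) (algebraMap_ne_zero (K := K) h2)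
  rw [← map_mul] at this
  simp only [Units.mul_inv, map_one, v_one hv] at this
  have i1 := v_algebraMap_nonneg hv h1
  have i2 := v_algebraMap_nonneg hv h2
  omega

lemma isUnit_of_v_eq_zero {r : R} (hr : r ≠ 0) (h : v (algebraMap R K r) = 0) : IsUnit r := by
  have hx : algebraMap R K r ≠ 0 := algebraMap_ne_zero hr
  have hinv : 0 ≤ v (algebraMap R K r)⁻¹ := by rw [v_inv hv hx, h]; simp
  obtain ⟨s, hs⟩ := (hv.2.2 _ (inv_ne_zero hx)).mp hinv
  have : algebraMap R K (s * r) = algebraMap R K 1 := by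
    rw [map_mul, hs, map_one, inv_mul_cancel₀ hx]
  have := IsFractionRing.injective R K this
  exact IsUnit.of_mul_eq_one s (by rw [mul_comm] at this; linear_combination this)

lemma exists_unit_of_v_eq_zero {c : K} (hc : c ≠ 0) (h : v c = 0) :
    ∃ r : R, IsUnit r ∧ algebraMap R K r = c := by
  obtain ⟨r, hr⟩ := (hv.2.2 _ hc).mp h.ge
  have hr0 : r ≠ 0 := by rintro rfl; simp at hr; exact hc hr.symm
  exact ⟨r, isUnit_of_v_eq_zero hv hr0 (by rw [hr, h]), hr⟩

end Val

lemma pi_ne_zero (hπ : Ideal.span {π} = IsLocalRing.maximalIdeal R) : π ≠ 0 := by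
  rintro rfl
  exact IsDiscreteValuationRing.not_a_field R (by rw [← hπ, Set.singleton_zero, Ideal.span_zero])

lemma pi_not_unit (hv : IsDVal R K v π) : ¬ IsUnit π := fun h => by
  have := v_isUnit hv (K := K) h
  rw [hv.2.1] at this; omega

section Lat

variable {L M : Submodule R (Fin n → K)} {ι : Type*} [Fintype ι]

/-- The matrix whose columns are the basis vectors of a lattice. -/
noncomputable def baseM {L : Submodule R (Fin n → K)} (b : Module.Basis (Fin n) R L) : Matrix (Fin n) (Fin n) K :=
  Matrix.of fun i j => (b j : Fin n → K) i

lemma span_coe_basis (b : Module.Basis ι R L) :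
    Submodule.span R (Set.range fun j => (b j : Fin n → K)) = L := by
  have h : (Set.range fun j => ((b j : L) : Fin n → K)) = L.subtype '' (Set.range b) := by
    ext x; simp [Submodule.subtype]
  rw [h, ← Submodule.map_span, b.span_eq, Submodule.map_top, Submodule.range_subtype]

lemma indepK (b : Module.Basis ι R L) :
    LinearIndependent K (fun j => (b j : Fin n → K)) := by
  rw [← LinearIndependent.iff_fractionRing R K]
  exact b.linearIndependent.map' L.subtype (Submodule.ker_subtype L)

lemma spanK_coe (hL : IsLattice R K n L) (b : Module.Basis ι R L) :
    Submodule.span K (Set.range fun j => (b j : Fin n → K)) = ⊤ := by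
  rw [eq_top_iff, ← hL.2]
  refine Submodule.span_le.mpr fun x hx => ?_
  have hx' : x ∈ Submodule.span R (Set.range fun j => (b j : Fin n → K)) := by
    rw [span_coe_basis b]; exact hx
  exact Submodule.span_le_restrictScalars R K _ hx'

/-- The coerced basis as a `K`-basis of `K^n`. -/
noncomputable def basisK (hL : IsLattice R K n L) (b : Module.Basis ι R L) :
    Module.Basis ι K (Fin n → K) :=
  Module.Basis.mk (indepK b) (by rw [spanK_coe hL b])

lemma basisK_apply (hL : IsLattice R K n L) (b : Module.Basis ι R L) (j : ι) :
    basisK hL b j = (b j : Fin n → K) := by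
  simp [basisK]

lemma exists_basis (hL : IsLattice R K n L) : Nonempty (Module.Basis (Fin n) R L) := by
  haveI : Module.IsTorsionFree R K :=
    Module.isTorsionFree_iff_algebraMap_injective.mpr (IsFractionRing.injective R K)
  haveI : Module.Finite R L := Module.Finite.iff_fg.mpr hL.1
  let b0 := Module.Free.chooseBasis R L
  let e : Module.Free.ChooseBasisIndex R L ≃ Fin n :=
    Module.Basis.indexEquiv (basisK hL b0) (Pi.basisFun K (Fin n))
  exact ⟨b0.reindex e⟩

lemma det_baseM_ne_zero (hL : IsLattice R K n L) (b : Module.Basis (Fin n) R L) :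
    (baseM b).det ≠ 0 := by
  have h := (Pi.basisFun K (Fin n)).isUnit_det (basisK hL b)
  rw [Module.Basis.det_apply] at h
  have he : (Pi.basisFun K (Fin n)).toMatrix ⇑(basisK hL b) = baseM b := by
    ext i j
    rw [Module.Basis.toMatrix_apply, Pi.basisFun_repr, basisK_apply]
    rfl
  rw [he] at h
  exact h.ne_zero

end Lat

section DD

variable {L M : Submodule R (Fin n → K)}

/-- The valuation of the determinant of a lattice basis matrix. -/
noncomputable def dd (v : K → ℤ) (L : Submodule R (Fin n → K)) : ℤ :=
  if h : Nonempty (Module.Basis (Fin n) R L) then v (baseM h.some).det else 0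

lemma typeOf_eq_dd (vv : K → ℤ) (L : Submodule R (Fin n → K)) :
    typeOf R K n vv L = ((dd vv L : ℤ) : ZMod n) := by
  unfold typeOf dd
  split
  · rfl
  · simp

lemma coe_sum_repr (b : Module.Basis (Fin n) R L) (x : L) (i : Fin n) :
    (x : Fin n → K) i = ∑ l, algebraMap R K (b.repr x l) * (b l : Fin n → K) i := by
  calc (x : Fin n → K) i = L.subtype x i := rfl
  _ = L.subtype (∑ l, b.repr x l • b l) i := by rw [b.sum_repr x]
  _ = (∑ l, L.subtype (b.repr x l • b l)) i := by rw [map_sum]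
  _ = ∑ l, (b.repr x l • b l : L).1 i := by rw [Finset.sum_apply]; rfl
  _ = ∑ l, algebraMap R K (b.repr x l) * (b l : Fin n → K) i := by
      refine Finset.sum_congr rfl fun l _ => ?_
      rw [SetLike.val_smul, Pi.smul_apply, Algebra.smul_def]

lemma v_det_baseM_eq (hv : IsDVal R K v π) (hL : IsLattice R K n L)
    (b b' : Module.Basis (Fin n) R L) : v (baseM b').det = v (baseM b).det := by
  classical
  set P := b.toMatrix ⇑b' with hP
  have hcol : baseM b' = baseM b * P.map (algebraMap R K) := by
    ext i j
    rw [Matrix.mul_apply]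
    show ((b' j : L) : Fin n → K) i = _
    rw [coe_sum_repr b (b' j) i]
    refine Finset.sum_congr rfl fun l _ => ?_
    rw [mul_comm]
    rfl
  have hdet : (baseM b').det = (baseM b).det * algebraMap R K P.det := by
    rw [hcol, Matrix.det_mul, RingHom.map_det]
    rfl
  have hunit : IsUnit P.det := by
    haveI := b.invertibleToMatrix b'
    exact Matrix.isUnit_det_of_invertible P
  rw [hdet, hv.1 _ _ (det_baseM_ne_zero hL b) (hunit.map (algebraMap R K)).ne_zero,
    v_isUnit hv hunit]
  omega

lemma dd_eq (hv : IsDVal R K v π) (hL : IsLattice R K n L) (b : Module.Basis (Fin n) R L) :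
    dd v L = v (baseM b).det := by
  unfold dd
  rw [dif_pos (exists_basis hL)]
  exact v_det_baseM_eq hv hL b _

lemma typeOf_eq_zero_iff (hn : n ≠ 0) (vv : K → ℤ) (L : Submodule R (Fin n → K)) :
    typeOf R K n vv L = 0 ↔ (n : ℤ) ∣ dd vv L := by
  haveI : NeZero n := ⟨hn⟩
  rw [typeOf_eq_dd, ZMod.intCast_zmod_eq_zero_iff_dvd]

end DD

section Smul

variable {L M : Submodule R (Fin n → K)} {c : K}

lemma mem_smul_iff {x : Fin n → K} : x ∈ c • L ↔ ∃ y ∈ L, c • y = x := by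
  rw [← SetLike.mem_coe, Submodule.coe_pointwise_smul]
  exact Set.mem_smul_set

lemma smul_eq_map (hc : c ≠ 0) (L : Submodule R (Fin n → K)) :
    c • L = L.map
      (((LinearEquiv.smulOfNeZero K (Fin n → K) c hc).restrictScalars R
        : (Fin n → K) ≃ₗ[R] (Fin n → K)) : (Fin n → K) →ₗ[R] (Fin n → K)) := by
  ext x
  rw [mem_smul_iff, Submodule.mem_map]
  simp

/-- Scaling a basis gives a basis of the scaled lattice. -/
noncomputable def basisSmul (hc : c ≠ 0) (b : Module.Basis (Fin n) R L) :
    Module.Basis (Fin n) R (c • L : Submodule R (Fin n → K)) :=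
  b.map (((((LinearEquiv.smulOfNeZero K (Fin n → K) c hc).restrictScalars R).submoduleMap L))
    ≪≫ₗ LinearEquiv.ofEq _ _ (smul_eq_map hc L).symm)

lemma basisSmul_apply (hc : c ≠ 0) (b : Module.Basis (Fin n) R L) (j : Fin n) :
    ((basisSmul hc b j : Fin n → K)) = c • (b j : Fin n → K) := by
  simp [basisSmul]

lemma isLattice_smul (hL : IsLattice R K n L) (hc : c ≠ 0) :
    IsLattice R K n (c • L) := by
  constructor
  · rw [smul_eq_map hc L]
    exact hL.1.map _
  · rw [Submodule.coe_pointwise_smul, eq_top_iff]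
    intro x _
    have : c⁻¹ • x ∈ Submodule.span K (L : Set (Fin n → K)) := hL.2.symm ▸ Submodule.mem_top
    have h2 : x = c • (c⁻¹ • x) := by rw [smul_smul, mul_inv_cancel₀ hc, one_smul]
    rw [h2]
    revert this
    generalize c⁻¹ • x = y
    intro hy
    refine Submodule.span_induction (fun z hz => Submodule.subset_span ⟨z, hz, rfl⟩)
      (by simpa using Submodule.zero_mem _) ?_ ?_ hy
    · intro y₁ y₂ _ _ m1 m2
      rw [smul_add]; exact Submodule.add_mem _ m1 m2
    · intro a y₁ _ m1
      rw [smul_comm]; exact Submodule.smul_mem _ _ m1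

lemma dd_smul (hv : IsDVal R K v π) (hL : IsLattice R K n L) (hc : c ≠ 0) :
    dd v (c • L) = n * v c + dd v L := by
  obtain ⟨b⟩ := exists_basis hL
  rw [dd_eq hv (isLattice_smul hL hc) (basisSmul hc b), dd_eq hv hL b]
  have hM : baseM (basisSmul hc b) = c • baseM b := by
    ext i j
    show ((basisSmul hc b j : Fin n → K)) i = _
    rw [basisSmul_apply hc b j]
    rfl
  rw [hM, Matrix.det_smul, Fintype.card_fin,
    hv.1 _ _ (pow_ne_zero n hc) (det_baseM_ne_zero hL b), v_pow hv hc]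

lemma unit_smul {r : R} (hu : IsUnit r) (L : Submodule R (Fin n → K)) :
    (algebraMap R K r) • L = L := by
  obtain ⟨u, rfl⟩ := hu
  apply le_antisymm
  · intro x hx
    obtain ⟨y, hy, rfl⟩ := mem_smul_iff.mp hx
    rw [algebraMap_smul]
    exact L.smul_mem _ hy
  · intro x hx
    rw [mem_smul_iff]
    refine ⟨algebraMap R K ((u⁻¹ : Rˣ) : R) • x, ?_, ?_⟩
    · rw [algebraMap_smul]; exact L.smul_mem _ hx
    · rw [smul_smul, ← map_mul]
      simp

lemma smul_pow_of_v (hv : IsDVal R K v π) (hπ0 : algebraMap R K π ≠ 0) (hc : c ≠ 0)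
    (L : Submodule R (Fin n → K)) :
    c • L = ((algebraMap R K π) ^ (v c : ℤ)) • L := by
  set p : K := algebraMap R K π with hp
  set w : K := c * p ^ (-(v c) : ℤ) with hw
  have hwne : w ≠ 0 := mul_ne_zero hc (zpow_ne_zero _ hπ0)
  have hvw : v w = 0 := by
    rw [hw, hv.1 _ _ hc (zpow_ne_zero _ hπ0), v_zpow hv hπ0, hv.2.1]
    ring
  obtain ⟨r, hru, hr⟩ := exists_unit_of_v_eq_zero hv hwne hvw
  have hc' : c = w * p ^ (v c : ℤ) := by
    rw [hw, mul_assoc, ← zpow_add₀ hπ0]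
    simp
  calc c • L = (w * p ^ (v c : ℤ)) • L := by rw [← hc']
  _ = w • ((p ^ (v c : ℤ)) • L) := mul_smul _ _ _
  _ = (p ^ (v c : ℤ)) • L := by rw [← hr, unit_smul hru]

end Smul

section Hom

variable {L M N : Submodule R (Fin n → K)}

lemma hom_refl (L : Submodule R (Fin n → K)) : Homothetic R K n L L :=
  ⟨1, one_ne_zero, (one_smul K L).symm⟩

lemma hom_symm (h : Homothetic R K n L M) : Homothetic R K n M L := by
  obtain ⟨c, hc, rfl⟩ := h
  exact ⟨c⁻¹, inv_ne_zero hc, by rw [smul_smul, inv_mul_cancel₀ hc, one_smul]⟩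

lemma hom_trans (h : Homothetic R K n L M) (h' : Homothetic R K n M N) :
    Homothetic R K n L N := by
  obtain ⟨c, hc, rfl⟩ := h
  obtain ⟨c', hc', rfl⟩ := h'
  exact ⟨c' * c, mul_ne_zero hc' hc, smul_smul c' c L⟩

lemma isLattice_hom (hL : IsLattice R K n L) (h : Homothetic R K n L M) :
    IsLattice R K n M := by
  obtain ⟨c, hc, rfl⟩ := h
  exact isLattice_smul hL hc

lemma dd_dvd_of_hom (hv : IsDVal R K v π) (hL : IsLattice R K n L)
    (h : Homothetic R K n L M) : (n : ℤ) ∣ dd v M - dd v L := by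
  obtain ⟨c, hc, rfl⟩ := h
  rw [dd_smul hv hL hc]
  exact ⟨v c, by ring⟩

end Hom

section Mono

variable {L M : Submodule R (Fin n → K)}

lemma dd_le_and_eq (hv : IsDVal R K v π) (hM : IsLattice R K n M) (hL : IsLattice R K n L)
    (hML : M ≤ L) :
    dd v L ≤ dd v M ∧ (dd v M = dd v L → M = L) := by
  obtain ⟨bM⟩ := exists_basis hM
  obtain ⟨bL⟩ := exists_basis hL
  classical
  set A : Matrix (Fin n) (Fin n) R :=
    Matrix.of (fun i j => bL.repr ⟨(bM j : Fin n → K), hML (bM j).2⟩ i) with hA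
  have hcol : baseM bM = baseM bL * A.map (algebraMap R K) := by
    ext i j
    rw [Matrix.mul_apply]
    calc baseM bM i j = ((⟨(bM j : Fin n → K), hML (bM j).2⟩ : L) : Fin n → K) i := rfl
    _ = ∑ l, algebraMap R K (bL.repr ⟨(bM j : Fin n → K), hML (bM j).2⟩ l)
          * (bL l : Fin n → K) i := coe_sum_repr bL _ i
    _ = ∑ l, baseM bL i l * A.map (algebraMap R K) l j := by
        refine Finset.sum_congr rfl fun l _ => ?_
        rw [mul_comm]
        rfl
  have hdet : (baseM bM).det = (baseM bL).det * algebraMap R K A.det := by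
    rw [hcol, Matrix.det_mul, RingHom.map_det]
    rfl
  have hAdet0 : A.det ≠ 0 := by
    intro h0
    apply det_baseM_ne_zero hM bM
    rw [hdet, h0, map_zero, mul_zero]
  have hv' : v (baseM bM).det = v (baseM bL).det + v (algebraMap R K A.det) := by
    rw [hdet]
    exact hv.1 _ _ (det_baseM_ne_zero hL bL) (algebraMap_ne_zero hAdet0)
  have hnn := v_algebraMap_nonneg hv hAdet0
  constructor
  · rw [dd_eq hv hM bM, dd_eq hv hL bL]
    omega
  · intro heq
    rw [dd_eq hv hM bM, dd_eq hv hL bL] at heq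
    have hz : v (algebraMap R K A.det) = 0 := by omega
    have hu := isUnit_of_v_eq_zero hv hAdet0 hz
    haveI := A.invertibleOfIsUnitDet hu
    refine le_antisymm hML ?_
    have hcol2 : baseM bL = baseM bM * (⅟A).map (algebraMap R K) := by
      rw [hcol, Matrix.mul_assoc, ← Matrix.map_mul, mul_invOf_self]
      simp
    rw [← span_coe_basis bL]
    refine Submodule.span_le.mpr ?_
    rintro x ⟨j, rfl⟩
    have hx : (bL j : Fin n → K) = ∑ l, (⅟A) l j • (bM l : Fin n → K) := by
      ext i
      calc (bL j : Fin n → K) i = baseM bL i j := rfl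
      _ = (baseM bM * (⅟A).map (algebraMap R K)) i j := by rw [← hcol2]
      _ = ∑ l, (bM l : Fin n → K) i * algebraMap R K ((⅟A) l j) := by
          rw [Matrix.mul_apply]
          rfl
      _ = ∑ l, ((⅟A) l j • (bM l : Fin n → K)) i := by
          refine Finset.sum_congr rfl fun l _ => ?_
          rw [Pi.smul_apply, Algebra.smul_def, mul_comm]
      _ = (∑ l, (⅟A) l j • (bM l : Fin n → K)) i := (Finset.sum_apply _ _ _).symm
    show (bL j : Fin n → K) ∈ M
    rw [hx]
    exact Submodule.sum_mem _ fun l _ => Submodule.smul_mem _ _ (bM l).2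

lemma dd_le (hv : IsDVal R K v π) (hM : IsLattice R K n M) (hL : IsLattice R K n L)
    (hML : M ≤ L) : dd v L ≤ dd v M :=
  (dd_le_and_eq hv hM hL hML).1

lemma eq_of_dd_eq (hv : IsDVal R K v π) (hM : IsLattice R K n M) (hL : IsLattice R K n L)
    (hML : M ≤ L) (h : dd v M = dd v L) : M = L :=
  (dd_le_and_eq hv hM hL hML).2 h

end Mono

section LatS

variable {L : Submodule R (Fin n → K)}

lemma smul_mono {c : K} {A B : Submodule R (Fin n → K)} (h : A ≤ B) : c • A ≤ c • B := by
  intro x hx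
  obtain ⟨y, hy, rfl⟩ := mem_smul_iff.mp hx
  exact mem_smul_iff.mpr ⟨y, h hy, rfl⟩

lemma pi_smul_le (L : Submodule R (Fin n → K)) : (algebraMap R K π) • L ≤ L := by
  intro x hx
  obtain ⟨y, hy, rfl⟩ := mem_smul_iff.mp hx
  rw [algebraMap_smul]
  exact L.smul_mem _ hy

variable (π) in
/-- The scaled family of basis vectors used to build intermediate lattices. -/
noncomputable def famS (b : Module.Basis (Fin n) R L) (S : Finset (Fin n)) : Fin n → (Fin n → K) :=
  fun j => if j ∈ S then (b j : Fin n → K) else algebraMap R K π • (b j : Fin n → K)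

variable (π) in
/-- The intermediate lattice spanned by `b j` for `j ∈ S` and `π • b j` otherwise. -/
noncomputable def latS (b : Module.Basis (Fin n) R L) (S : Finset (Fin n)) : Submodule R (Fin n → K) :=
  Submodule.span R (Set.range (famS π b S))

lemma famS_eq (b : Module.Basis (Fin n) R L) (S : Finset (Fin n)) (j : Fin n) :
    famS π b S j = (if j ∈ S then (1:K) else algebraMap R K π) • (b j : Fin n → K) := by
  by_cases hj : j ∈ S <;> simp [famS, hj]

lemma famS_mem_latS (b : Module.Basis (Fin n) R L) (S : Finset (Fin n)) (j : Fin n) :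
    famS π b S j ∈ latS π b S :=
  Submodule.subset_span ⟨j, rfl⟩

lemma coe_mem_latS (b : Module.Basis (Fin n) R L) {S : Finset (Fin n)} {j : Fin n} (hj : j ∈ S) :
    (b j : Fin n → K) ∈ latS π b S := by
  have h := famS_mem_latS (π := π) b S j
  rwa [famS, if_pos hj] at h

lemma latS_le (b : Module.Basis (Fin n) R L) (S : Finset (Fin n)) : latS π b S ≤ L := by
  refine Submodule.span_le.mpr ?_
  rintro x ⟨j, rfl⟩
  rw [famS]
  split
  · exact (b j).2
  · rw [algebraMap_smul]
    exact L.smul_mem _ (b j).2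

lemma smul_le_latS (b : Module.Basis (Fin n) R L) (S : Finset (Fin n)) :
    (algebraMap R K π) • L ≤ latS π b S := by
  have h1 : (algebraMap R K π) • L =
      Submodule.span R ((algebraMap R K π) • (Set.range fun j => (b j : Fin n → K))) := by
    rw [← Submodule.smul_span, span_coe_basis]
  rw [h1]
  refine Submodule.span_le.mpr ?_
  rintro z hz
  obtain ⟨x, ⟨j, rfl⟩, rfl⟩ := hz
  show algebraMap R K π • (b j : Fin n → K) ∈ latS π b S
  by_cases hj : j ∈ S
  · have h : algebraMap R K π • (b j : Fin n → K) = π • (b j : Fin n → K) :=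
      algebraMap_smul K π _
    rw [h]
    exact Submodule.smul_mem _ _ (coe_mem_latS b hj)
  · have h : algebraMap R K π • (b j : Fin n → K) = famS π b S j := by
      rw [famS, if_neg hj]
    rw [h]
    exact famS_mem_latS (π := π) b S j

lemma indepK_famS (hπ0 : algebraMap R K π ≠ 0) (b : Module.Basis (Fin n) R L)
    (S : Finset (Fin n)) : LinearIndependent K (famS π b S) := by
  have h := (indepK b).units_smul
    (fun j => if hj : j ∈ S then 1 else Units.mk0 (algebraMap R K π) hπ0)
  convert h using 1
  funext j
  by_cases hj : j ∈ S <;>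
    simp [famS, hj, Pi.smul_apply', Units.smul_def]

lemma indepR_famS (hπ0 : algebraMap R K π ≠ 0) (b : Module.Basis (Fin n) R L)
    (S : Finset (Fin n)) : LinearIndependent R (famS π b S) :=
  (LinearIndependent.iff_fractionRing R K).mpr (indepK_famS hπ0 b S)

/-- The scaled family as a basis of `latS`. -/
noncomputable def basisLatS (hπ0 : algebraMap R K π ≠ 0) (b : Module.Basis (Fin n) R L)
    (S : Finset (Fin n)) : Module.Basis (Fin n) R (latS π b S) := by
  refine Module.Basis.mk (v := fun j => (⟨famS π b S j, famS_mem_latS b S j⟩ : latS π b S)) ?_ ?_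
  · have h := indepR_famS hπ0 b S
    have hcomp : famS π b S = (latS π b S).subtype ∘
        (fun j => (⟨famS π b S j, famS_mem_latS b S j⟩ : latS π b S)) := rfl
    rw [hcomp] at h
    exact h.of_comp _
  · have hinj := Submodule.injective_subtype (latS π b S)
    have heq : Submodule.span R (Set.range
        (fun j => (⟨famS π b S j, famS_mem_latS (π := π) b S j⟩ : latS π b S))) = ⊤ := by
      apply Submodule.map_injective_of_injective hinj
      rw [Submodule.map_span, ← Set.range_comp, Submodule.map_top, Submodule.range_subtype]
      rfl
    rw [heq]

lemma coe_basisLatS (hπ0 : algebraMap R K π ≠ 0) (b : Module.Basis (Fin n) R L)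
    (S : Finset (Fin n)) (j : Fin n) :
    ((basisLatS hπ0 b S j : latS π b S) : Fin n → K) = famS π b S j := by
  simp [basisLatS]

lemma isLattice_latS (hL : IsLattice R K n L) (hπ0 : algebraMap R K π ≠ 0)
    (b : Module.Basis (Fin n) R L) (S : Finset (Fin n)) : IsLattice R K n (latS π b S) := by
  constructor
  · exact Submodule.fg_span (Set.finite_range _)
  · rw [eq_top_iff, ← spanK_coe hL b]
    refine Submodule.span_le.mpr ?_
    rintro x ⟨j, rfl⟩
    show (b j : Fin n → K) ∈ Submodule.span K ((latS π b S : Set (Fin n → K)))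
    by_cases hj : j ∈ S
    · exact Submodule.subset_span (coe_mem_latS b hj)
    · have hx : (b j : Fin n → K) = (algebraMap R K π)⁻¹ • famS π b S j := by
        rw [famS, if_neg hj, smul_smul, inv_mul_cancel₀ hπ0, one_smul]
      rw [hx]
      exact Submodule.smul_mem _ _ (Submodule.subset_span (famS_mem_latS b S j))

lemma dd_latS (hv : IsDVal R K v π) (hπ0 : algebraMap R K π ≠ 0)
    (hL : IsLattice R K n L) (b : Module.Basis (Fin n) R L) (S : Finset (Fin n)) :
    dd v (latS π b S) = dd v L + (n - S.card : ℕ) := by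
  classical
  rw [dd_eq hv (isLattice_latS hL hπ0 b S) (basisLatS hπ0 b S), dd_eq hv hL b]
  set d : Fin n → K := fun j => if j ∈ S then (1:K) else algebraMap R K π with hd
  have hM : baseM (basisLatS hπ0 b S) = baseM b * Matrix.diagonal d := by
    ext i j
    rw [Matrix.mul_diagonal]
    calc baseM (basisLatS hπ0 b S) i j = famS π b S j i := by
          rw [show baseM (basisLatS hπ0 b S) i j
            = ((basisLatS hπ0 b S j : latS π b S) : Fin n → K) i from rfl,
            coe_basisLatS]
    _ = (d j • (b j : Fin n → K)) i := by rw [famS_eq]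
    _ = baseM b i j * d j := by
          rw [Pi.smul_apply, smul_eq_mul, mul_comm]
          rfl
  have hprod : ∏ j, d j = (algebraMap R K π) ^ (n - S.card : ℕ) := by
    rw [hd]
    rw [Finset.prod_ite (fun _ => (1:K)) (fun _ => algebraMap R K π)]
    simp only [Finset.prod_const_one, one_mul, Finset.prod_const]
    congr 1
    rw [Finset.filter_not, Finset.filter_mem_eq_inter, Finset.univ_inter]
    rw [Finset.card_sdiff_of_subset (Finset.subset_univ S), Finset.card_univ, Fintype.card_fin]
  have hdd : (baseM (basisLatS hπ0 b S)).det
      = (baseM b).det * (algebraMap R K π) ^ (n - S.card : ℕ) := by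
    rw [hM, Matrix.det_mul, Matrix.det_diagonal, hprod]
  rw [hdd, hv.1 _ _ (det_baseM_ne_zero hL b) (pow_ne_zero _ hπ0), v_pow hv hπ0, hv.2.1]
  push_cast
  ring

lemma not_mem_latS (hv : IsDVal R K v π) (hL : IsLattice R K n L)
    (hπ0 : algebraMap R K π ≠ 0) (hπu : ¬ IsUnit π) (b : Module.Basis (Fin n) R L)
    {S : Finset (Fin n)} {j : Fin n} (hj : j ∉ S) :
    (b j : Fin n → K) ∉ latS π b S := by
  intro hmem
  obtain ⟨c, hc⟩ := (Submodule.mem_span_range_iff_exists_fun R).mp hmem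
  classical
  set d : Fin n → K := fun i => if i ∈ S then (1:K) else algebraMap R K π with hd
  set e : Fin n → K := fun i => algebraMap R K (c i) * d i - if i = j then 1 else 0 with he
  have hsum : ∑ i, e i • (b i : Fin n → K) = 0 := by
    have h1 : ∀ i, (c i) • famS π b S i
        = (algebraMap R K (c i) * d i) • (b i : Fin n → K) := by
      intro i
      rw [famS_eq, ← algebraMap_smul K (c i), smul_smul]
    have h2 : ∑ i, e i • (b i : Fin n → K)
        = (∑ i, c i • famS π b S i)
          - ∑ i, (if i = j then (1:K) else 0) • (b i : Fin n → K) := by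
      rw [← Finset.sum_sub_distrib]
      refine Finset.sum_congr rfl fun i _ => ?_
      rw [he]
      rw [sub_smul, h1 i]
    rw [h2, hc]
    simp [ite_smul]
  have hall := Fintype.linearIndependent_iff.mp (indepK b) e hsum
  have hj' := hall j
  rw [he] at hj'
  simp only [if_pos rfl, hd, if_neg hj] at hj'
  have h2 : algebraMap R K (c j * π) = algebraMap R K 1 := by
    rw [map_mul, map_one]
    exact sub_eq_zero.mp hj'
  have h1 : c j * π = 1 := IsFractionRing.injective R K h2
  exact hπu (IsUnit.of_mul_eq_one (c j) (by rw [mul_comm]; exact h1))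

end LatS

section Assemble

variable {L M L₁ L₂ : Submodule R (Fin n → K)}

lemma dd_zpow_smul (hv : IsDVal R K v π) (hπ0 : algebraMap R K π ≠ 0)
    (hL : IsLattice R K n L) (m : ℤ) :
    dd v (((algebraMap R K π) ^ m) • L) = dd v L + n * m := by
  rw [dd_smul hv hL (zpow_ne_zero _ hπ0), v_zpow hv hπ0, hv.2.1]
  ring

lemma adj_between (hadj : AdjacentL R K n π M L₁) :
    ∃ c : K, c ≠ 0 ∧ (algebraMap R K π) • (c • M) ≤ L₁ ∧ L₁ ≤ c • M := by
  obtain ⟨_, A, B, ⟨a, ha, rfl⟩, ⟨bb, hb, rfl⟩, hπAB, hBA⟩ := hadj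
  refine ⟨bb⁻¹ * a, mul_ne_zero (inv_ne_zero hb) ha, ?_, ?_⟩
  · have h2 : (algebraMap R K π) • ((bb⁻¹ * a) • M)
        = bb⁻¹ • ((algebraMap R K π) • (a • M)) := by
      rw [smul_smul, smul_smul, smul_smul]
      congr 1
      ring
    rw [h2]
    intro x hx
    obtain ⟨y, hy, rfl⟩ := mem_smul_iff.mp hx
    have hy' := hπAB hy
    obtain ⟨z, hz, hzy⟩ := mem_smul_iff.mp hy'
    rw [← hzy, smul_smul, inv_mul_cancel₀ hb, one_smul]
    exact hz
  · intro x hx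
    have hbx : bb • x ∈ bb • L₁ := Submodule.smul_mem_pointwise_smul _ _ _ hx
    have h2 := hBA hbx
    obtain ⟨z, hz, hzx⟩ := mem_smul_iff.mp h2
    refine mem_smul_iff.mpr ⟨z, hz, ?_⟩
    calc (bb⁻¹ * a) • z = bb⁻¹ • (a • z) := mul_smul _ _ _
    _ = bb⁻¹ • (bb • x) := by rw [hzx]
    _ = x := by rw [smul_smul, inv_mul_cancel₀ hb, one_smul]

lemma hom_of_adj_both_type_zero (hn : 2 ≤ n) (hv : IsDVal R K v π)
    (hπ0 : algebraMap R K π ≠ 0)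
    (hM : IsLattice R K n M) (h₁ : IsLattice R K n L₁)
    (hMd : (n:ℤ) ∣ dd v M) (h1d : (n:ℤ) ∣ dd v L₁)
    (hadj : AdjacentL R K n π M L₁) : False := by
  have hnh := hadj.1
  obtain ⟨c, hc, hup, hdown⟩ := adj_between hadj
  have hcM : IsLattice R K n (c • M) := isLattice_smul hM hc
  have hπcM : IsLattice R K n ((algebraMap R K π) • (c • M)) :=
    isLattice_smul hcM hπ0
  have hle1 : dd v (c • M) ≤ dd v L₁ := dd_le hv h₁ hcM hdown
  have hle2 : dd v L₁ ≤ dd v ((algebraMap R K π) • (c • M)) := dd_le hv hπcM h₁ hup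
  have hdπ : dd v ((algebraMap R K π) • (c • M)) = dd v (c • M) + n := by
    rw [dd_smul hv hcM hπ0, hv.2.1]
    ring
  have hdvd : (n:ℤ) ∣ dd v (c • M) := by
    obtain ⟨k, hk⟩ := hMd
    exact ⟨k + v c, by rw [dd_smul hv hM hc, hk]; ring⟩
  obtain ⟨e, he⟩ := hdvd
  obtain ⟨d, hd2⟩ := h1d
  have hn0 : (0:ℤ) < n := by
    have : 0 < n := by omega
    exact_mod_cast this
  rw [hdπ] at hle2
  rw [he, hd2] at hle1 hle2
  have h1 : e ≤ d := le_of_mul_le_mul_left (by linarith) hn0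
  have h2 : d ≤ e + 1 := le_of_mul_le_mul_left
    (show (n:ℤ) * d ≤ n * (e + 1) by ring_nf; ring_nf at hle2; linarith) hn0
  have hcase : d = e ∨ d = e + 1 := by omega
  rcases hcase with h | h
  · have hdd : dd v L₁ = dd v (c • M) := by rw [he, hd2, h]
    have heq := eq_of_dd_eq hv h₁ hcM hdown hdd
    exact hnh ⟨c, hc, heq⟩
  · have hdd : dd v ((algebraMap R K π) • (c • M)) = dd v L₁ := by
      rw [hdπ, he, hd2, h]
      ring
    have heq := eq_of_dd_eq hv hπcM h₁ hup hdd
    refine hnh ⟨algebraMap R K π * c, mul_ne_zero hπ0 hc, ?_⟩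
    rw [← heq, smul_smul]

lemma print_pin (hn : 2 ≤ n) (hv : IsDVal R K v π) (hπ0 : algebraMap R K π ≠ 0)
    (h₁ : IsLattice R K n L₁) (hmem : M ∈ PrintS R K n v π L₁)
    (ht : ¬ (n:ℤ) ∣ dd v L₁) :
    ∃ c : K, c ≠ 0 ∧ (algebraMap R K π) • (c • M) ≤ L₁ ∧ L₁ ≤ c • M ∧
      dd v (c • M) = dd v L₁ - dd v L₁ % n := by
  obtain ⟨hMlat, hMtype, hMrel⟩ := hmem
  have hMd : (n:ℤ) ∣ dd v M := (typeOf_eq_zero_iff (by omega) v M).mp hMtype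
  rcases hMrel with hhom | hadj
  · exfalso
    obtain ⟨k, hk⟩ := dd_dvd_of_hom hv hMlat hhom
    obtain ⟨l, hl⟩ := hMd
    exact ht ⟨k + l, by rw [mul_add, ← hk, ← hl]; ring⟩
  · obtain ⟨c, hc, hup, hdown⟩ := adj_between hadj
    have hcM : IsLattice R K n (c • M) := isLattice_smul hMlat hc
    have hπcM : IsLattice R K n ((algebraMap R K π) • (c • M)) := isLattice_smul hcM hπ0
    have hle1 : dd v (c • M) ≤ dd v L₁ := dd_le hv h₁ hcM hdown
    have hle2 : dd v L₁ ≤ dd v ((algebraMap R K π) • (c • M)) := dd_le hv hπcM h₁ hup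
    have hdπ : dd v ((algebraMap R K π) • (c • M)) = dd v (c • M) + n := by
      rw [dd_smul hv hcM hπ0, hv.2.1]; ring
    have hdvd : (n:ℤ) ∣ dd v (c • M) := by
      obtain ⟨k, hk⟩ := hMd
      exact ⟨k + v c, by rw [dd_smul hv hMlat hc, hk]; ring⟩
    refine ⟨c, hc, hup, hdown, ?_⟩
    obtain ⟨e, he⟩ := hdvd
    have hn0 : (0:ℤ) < n := by
      have : 0 < n := by omega
      exact_mod_cast this
    set D := dd v L₁ with hD
    have hr0 : 0 ≤ D % n := Int.emod_nonneg D (by omega)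
    have hrn : D % n < n := Int.emod_lt_of_pos D hn0
    have hrpos : 0 < D % n := by
      rcases lt_or_eq_of_le hr0 with h | h
      · exact h
      · exact absurd (Int.dvd_of_emod_eq_zero h.symm) ht
    have hdm : D = n * (D / n) + D % n := (Int.mul_ediv_add_emod D n).symm
    rw [hdπ] at hle2
    rw [he] at hle1 hle2
    set q := D / n with hq
    have h1 : e < q + 1 := lt_of_mul_lt_mul_left
      (show (n:ℤ) * e < n * (q + 1) by ring_nf; ring_nf at hle1 hdm; linarith) hn0.le
    have h2 : q < e + 1 := lt_of_mul_lt_mul_left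
      (show (n:ℤ) * q < n * (e + 1) by ring_nf; ring_nf at hle2 hdm; linarith) hn0.le
    have heq : e = q := by omega
    rw [he, heq]
    linarith [hdm]

lemma latS_mem_print (hn : 2 ≤ n) (hv : IsDVal R K v π) (hπ0 : algebraMap R K π ≠ 0)
    (h₂ : IsLattice R K n L₂) (b : Module.Basis (Fin n) R L₂) {S : Finset (Fin n)}
    (hcard : (S.card : ℤ) = dd v L₂ % n) (ht₂ : ¬ (n:ℤ) ∣ dd v L₂) :
    latS π b S ∈ PrintS R K n v π L₂ := by
  have hlat := isLattice_latS h₂ hπ0 b S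
  have hn0 : (0:ℤ) < n := by
    have : 0 < n := by omega
    exact_mod_cast this
  have hr0 : 0 ≤ dd v L₂ % n := Int.emod_nonneg _ (by omega)
  have hrn : dd v L₂ % n < n := Int.emod_lt_of_pos _ hn0
  have hrpos : 0 < dd v L₂ % n := by
    rcases lt_or_eq_of_le hr0 with h | h
    · exact h
    · exact absurd (Int.dvd_of_emod_eq_zero h.symm) ht₂
  have hcard_le : S.card ≤ n := by
    have : (S.card : ℤ) < n := by omega
    exact_mod_cast this.le
  have hcast : ((n - S.card : ℕ) : ℤ) = (n:ℤ) - dd v L₂ % n := by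
    rw [Nat.cast_sub hcard_le, hcard]
  have hdd := dd_latS hv hπ0 h₂ b S
  have hdm := Int.mul_ediv_add_emod (dd v L₂) (n:ℤ)
  refine ⟨hlat, ?_, Or.inr ⟨?_, ?_⟩⟩
  · refine (typeOf_eq_zero_iff (by omega) v _).mpr ⟨dd v L₂ / n + 1, ?_⟩
    rw [hdd, hcast]
    ring_nf
    ring_nf at hdm
    linarith
  · rintro ⟨cc, hcc, hccM⟩
    have heq : dd v (cc • latS π b S) = dd v (latS π b S) + n * v cc := by
      rw [dd_smul hv hlat hcc]
      ring
    rw [← hccM, hdd, hcast] at heq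
    rcases le_or_gt 0 (v cc) with h | h
    · have : 0 ≤ (n:ℤ) * v cc := mul_nonneg hn0.le h
      linarith
    · have hle : v cc ≤ -1 := by omega
      have : (n:ℤ) * v cc ≤ n * (-1) := by
        exact mul_le_mul_of_nonneg_left hle hn0.le
      linarith
  · exact ⟨latS π b S, (algebraMap R K π) • L₂, hom_refl _,
      ⟨algebraMap R K π, hπ0, rfl⟩, smul_mono (latS_le b S), smul_le_latS b S⟩

lemma step (hn : 2 ≤ n) (hv : IsDVal R K v π) (hπ0 : algebraMap R K π ≠ 0)
    (h₁ : IsLattice R K n L₁) (h₂ : IsLattice R K n L₂)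
    (hsub : PrintS R K n v π L₂ ⊆ PrintS R K n v π L₁)
    (ht₁ : ¬ (n:ℤ) ∣ dd v L₁) (ht₂ : ¬ (n:ℤ) ∣ dd v L₂) :
    ∃ m : ℤ, ((algebraMap R K π) ^ m) • L₂ ≤ L₁ ∧
      dd v L₂ + n * m = dd v L₁ - dd v L₁ % n + dd v L₂ % n := by
  classical
  obtain ⟨b⟩ := exists_basis h₂
  have hn0 : (0:ℤ) < n := by
    have : 0 < n := by omega
    exact_mod_cast this
  have hr0 : 0 ≤ dd v L₂ % n := Int.emod_nonneg _ (by omega)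
  have hrn : dd v L₂ % n < n := Int.emod_lt_of_pos _ hn0
  have hrpos : 0 < dd v L₂ % n := by
    rcases lt_or_eq_of_le hr0 with h | h
    · exact h
    · exact absurd (Int.dvd_of_emod_eq_zero h.symm) ht₂
  set t : ℕ := (dd v L₂ % n).toNat with htdef
  have htcast : (t : ℤ) = dd v L₂ % n := Int.toNat_of_nonneg hr0
  have ht1 : 1 ≤ t := by omega
  have htn : t < n := by
    have : (t:ℤ) < n := by omega
    exact_mod_cast this
  have hS : ∀ j : Fin n, ∃ S : Finset (Fin n), j ∈ S ∧ S.card = t := by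
    intro j
    obtain ⟨T, hT, hTcard⟩ := Finset.exists_subset_card_eq (s := Finset.univ.erase j) (n := t-1)
      (by
        rw [Finset.card_erase_of_mem (Finset.mem_univ j), Finset.card_univ, Fintype.card_fin]
        omega)
    refine ⟨insert j T, Finset.mem_insert_self _ _, ?_⟩
    rw [Finset.card_insert_of_notMem (fun hj => (Finset.mem_erase.mp (hT hj)).1 rfl), hTcard]
    omega
  choose S hSmem hScard using hS
  have key : ∀ j, ∃ c : K, c ≠ 0 ∧
      (algebraMap R K π) • (c • latS π b (S j)) ≤ L₁ ∧
      dd v (c • latS π b (S j)) = dd v L₁ - dd v L₁ % n := by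
    intro j
    have hmem := latS_mem_print hn hv hπ0 h₂ b (S := S j)
      (by rw [hScard, htcast]) ht₂
    obtain ⟨c, hc, hup, hdown, hddc⟩ := print_pin hn hv hπ0 h₁ (hsub hmem) ht₁
    exact ⟨c, hc, hup, hddc⟩
  choose c hc hup hdd using key
  have hcardcast : ∀ j, ((n - (S j).card : ℕ) : ℤ) = (n:ℤ) - dd v L₂ % n := by
    intro j
    rw [Nat.cast_sub (by have := hScard j; omega : (S j).card ≤ n), hScard, htcast]
  have hvc : ∀ j, (n:ℤ) * v (c j)
      = dd v L₁ - dd v L₁ % n - dd v L₂ - n + dd v L₂ % n := by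
    intro j
    have h1 := hdd j
    rw [dd_smul hv (isLattice_latS h₂ hπ0 b (S j)) (hc j), dd_latS hv hπ0 h₂ b (S j),
      hcardcast j] at h1
    linarith
  have hne : Nonempty (Fin n) := ⟨⟨0, by omega⟩⟩
  obtain ⟨j₀⟩ := hne
  have hall : ∀ j, v (c j) = v (c j₀) := by
    intro j
    have := (hvc j).trans (hvc j₀).symm
    exact mul_left_cancel₀ (ne_of_gt hn0) this
  refine ⟨v (c j₀) + 1, ?_, ?_⟩
  · have hL2 : L₂ = Submodule.span R (Set.range fun j => (b j : Fin n → K)) :=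
      (span_coe_basis b).symm
    rw [hL2, Submodule.smul_span]
    refine Submodule.span_le.mpr ?_
    rintro x hx
    obtain ⟨y, ⟨j, rfl⟩, rfl⟩ := hx
    show ((algebraMap R K π) ^ (v (c j₀) + 1 : ℤ)) • (b j : Fin n → K) ∈ L₁
    have h1 := hup j
    rw [smul_pow_of_v hv hπ0 (hc j)] at h1
    have hmem2 : ((algebraMap R K π) ^ (v (c j) : ℤ)) • (b j : Fin n → K)
        ∈ ((algebraMap R K π) ^ (v (c j) : ℤ)) • latS π b (S j) :=
      Submodule.smul_mem_pointwise_smul _ _ _ (coe_mem_latS b (hSmem j))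
    have hmem3 := Submodule.smul_mem_pointwise_smul _ (algebraMap R K π) _ hmem2
    have hin := h1 hmem3
    have hsc : (algebraMap R K π) • (((algebraMap R K π) ^ (v (c j) : ℤ))
        • (b j : Fin n → K))
        = ((algebraMap R K π) ^ (v (c j₀) + 1 : ℤ)) • (b j : Fin n → K) := by
      rw [smul_smul, hall j, mul_comm, ← zpow_add_one₀ hπ0]
    rw [← hsc]
    exact hin
  · have h1 := hvc j₀
    linarith

lemma mixed_absurd (hn : 2 ≤ n) (hv : IsDVal R K v π) (hπ0 : algebraMap R K π ≠ 0)
    (hπu : ¬ IsUnit π) (h₁ : IsLattice R K n L₁) (h₂ : IsLattice R K n L₂)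
    (hsub : PrintS R K n v π L₂ ⊆ PrintS R K n v π L₁)
    (hd₁ : (n:ℤ) ∣ dd v L₁) (hd₂ : ¬ (n:ℤ) ∣ dd v L₂) : False := by
  classical
  obtain ⟨b⟩ := exists_basis h₂
  have hn0 : (0:ℤ) < n := by
    have : 0 < n := by omega
    exact_mod_cast this
  have hr0 : 0 ≤ dd v L₂ % n := Int.emod_nonneg _ (by omega)
  have hrn : dd v L₂ % n < n := Int.emod_lt_of_pos _ hn0
  have hrpos : 0 < dd v L₂ % n := by
    rcases lt_or_eq_of_le hr0 with h | h
    · exact h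
    · exact absurd (Int.dvd_of_emod_eq_zero h.symm) hd₂
  set t : ℕ := (dd v L₂ % n).toNat with htdef
  have htcast : (t : ℤ) = dd v L₂ % n := Int.toNat_of_nonneg hr0
  have ht1 : 1 ≤ t := by omega
  have htn : t < n := by
    have : (t:ℤ) < n := by omega
    exact_mod_cast this
  set j₀ : Fin n := ⟨0, by omega⟩ with hj₀def
  obtain ⟨T, hT, hTcard⟩ := Finset.exists_subset_card_eq (s := Finset.univ.erase j₀) (n := t-1)
    (by
      rw [Finset.card_erase_of_mem (Finset.mem_univ j₀), Finset.card_univ, Fintype.card_fin]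
      omega)
  have hj₀T : j₀ ∉ T := fun hj => (Finset.mem_erase.mp (hT hj)).1 rfl
  set Sa : Finset (Fin n) := insert j₀ T with hSadef
  have hSacard : Sa.card = t := by
    rw [hSadef, Finset.card_insert_of_notMem hj₀T, hTcard]
    omega
  have hj₀Sa : j₀ ∈ Sa := Finset.mem_insert_self _ _
  obtain ⟨Sb, hSbsub, hSbcard⟩ := Finset.exists_subset_card_eq (s := Finset.univ.erase j₀) (n := t)
    (by
      rw [Finset.card_erase_of_mem (Finset.mem_univ j₀), Finset.card_univ, Fintype.card_fin]
      omega)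
  have hj₀Sb : j₀ ∉ Sb := fun hj => (Finset.mem_erase.mp (hSbsub hj)).1 rfl
  have hm1 := latS_mem_print hn hv hπ0 h₂ b (S := Sa) (by rw [hSacard, htcast]) hd₂
  have hm2 := latS_mem_print hn hv hπ0 h₂ b (S := Sb) (by rw [hSbcard, htcast]) hd₂
  have homof : ∀ {N : Submodule R (Fin n → K)}, N ∈ PrintS R K n v π L₁ →
      Homothetic R K n N L₁ := by
    rintro N ⟨hNl, hNt, hrel⟩
    rcases hrel with h | h
    · exact h
    · exact (hom_of_adj_both_type_zero hn hv hπ0 hNl h₁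
        ((typeOf_eq_zero_iff (by omega) v N).mp hNt) hd₁ h).elim
  have hhom := hom_trans (homof (hsub hm1)) (hom_symm (homof (hsub hm2)))
  obtain ⟨cc, hcc, hccM⟩ := hhom
  have hdd1 := dd_latS hv hπ0 h₂ b Sa
  have hdd2 := dd_latS hv hπ0 h₂ b Sb
  have heq : dd v (latS π b Sb) = dd v (latS π b Sa) + n * v cc := by
    rw [hccM, dd_smul hv (isLattice_latS h₂ hπ0 b Sa) hcc]
    ring
  have hvcc : (n:ℤ) * v cc = 0 := by
    rw [hdd1, hdd2, hSacard, hSbcard] at heq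
    linarith
  have hv0 : v cc = 0 := by
    rcases mul_eq_zero.mp hvcc with h | h
    · exact absurd h (ne_of_gt hn0)
    · exact h
  have hSS : latS π b Sb = latS π b Sa := by
    rw [hccM, smul_pow_of_v hv hπ0 hcc, hv0, zpow_zero, one_smul]
  have hmem := coe_mem_latS (π := π) b hj₀Sa
  rw [← hSS] at hmem
  exact not_mem_latS hv h₂ hπ0 hπu b hj₀Sb hmem

end Assemble

end Aux

/-- If two homothety classes of `R`-lattices in `K^n` have equal prints,
then they are equal (i.e. the lattices are homothetic). -/
theorem prints_determine_vertex
    {R : Type*} [CommRing R] [IsDomain R] [IsDiscreteValuationRing R]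
    {K : Type*} [Field K] [Algebra R K] [IsFractionRing R K]
    (n : ℕ) (hn : 2 ≤ n)
    (π : R) (hπ : Ideal.span {π} = IsLocalRing.maximalIdeal R)
    (v : K → ℤ) (hv : IsDVal R K v π)
    (L₁ L₂ : Submodule R (Fin n → K))
    (h₁ : IsLattice R K n L₁) (h₂ : IsLattice R K n L₂)
    (hP : PrintS R K n v π L₁ = PrintS R K n v π L₂) :
    Homothetic R K n L₁ L₂ := by
  have hπr : π ≠ 0 := pi_ne_zero hπ
  have hπ0 : algebraMap R K π ≠ 0 := algebraMap_ne_zero hπr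
  have hπu : ¬ IsUnit π := pi_not_unit hv
  have hsub21 : PrintS R K n v π L₂ ⊆ PrintS R K n v π L₁ := by rw [hP]
  have hsub12 : PrintS R K n v π L₁ ⊆ PrintS R K n v π L₂ := by rw [hP]
  by_cases hd₁ : (n:ℤ) ∣ dd v L₁ <;> by_cases hd₂ : (n:ℤ) ∣ dd v L₂
  · have hm : L₂ ∈ PrintS R K n v π L₂ :=
      ⟨h₂, (typeOf_eq_zero_iff (by omega) v L₂).mpr hd₂, Or.inl (hom_refl _)⟩
    rw [← hP] at hm
    obtain ⟨_, _, hrel⟩ := hm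
    rcases hrel with h | h
    · exact hom_symm h
    · exact (hom_of_adj_both_type_zero hn hv hπ0 h₂ h₁ hd₂ hd₁ h).elim
  · exact (mixed_absurd hn hv hπ0 hπu h₁ h₂ hsub21 hd₁ hd₂).elim
  · exact (mixed_absurd hn hv hπ0 hπu h₂ h₁ hsub12 hd₂ hd₁).elim
  · obtain ⟨m, hmle, hmd⟩ := step hn hv hπ0 h₁ h₂ hsub21 hd₁ hd₂
    obtain ⟨m', hmle', hmd'⟩ := step hn hv hπ0 h₂ h₁ hsub12 hd₂ hd₁
    have hl2 : IsLattice R K n (((algebraMap R K π) ^ m) • L₂) :=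
      isLattice_smul h₂ (zpow_ne_zero _ hπ0)
    have hl1 : IsLattice R K n (((algebraMap R K π) ^ m') • L₁) :=
      isLattice_smul h₁ (zpow_ne_zero _ hπ0)
    have hq1 : dd v L₁ ≤ dd v (((algebraMap R K π) ^ m) • L₂) := dd_le hv hl2 h₁ hmle
    have hq2 : dd v L₂ ≤ dd v (((algebraMap R K π) ^ m') • L₁) := dd_le hv hl1 h₂ hmle'
    rw [dd_zpow_smul hv hπ0 h₂ m] at hq1
    rw [dd_zpow_smul hv hπ0 h₁ m'] at hq2
    have hr12 : dd v L₁ % n = dd v L₂ % n := by omega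
    have hdd : dd v (((algebraMap R K π) ^ m) • L₂) = dd v L₁ := by
      rw [dd_zpow_smul hv hπ0 h₂ m]
      omega
    have heq := eq_of_dd_eq hv hl2 h₁ hmle hdd
    exact hom_symm ⟨(algebraMap R K π) ^ m, zpow_ne_zero _ hπ0, heq.symm⟩

end LGR
end

section
/- Let Λ be a torsion-free group equipped with a left-invariant metric d_Λ all of whose balls are finite, acting by isometries on a metric space (X, d_X). Let q : Λ → X be an equivariant map, i.e. q(gλ) = g·q(λ) for all g, λ ∈ Λ, and suppose there exist constants L ≥ 1 and ε ≥ 0 such that d_Λ(a, b) ≤ L·d_X(q(a), q(b)) + ε for all a, b ∈ Λ. Then q is injective. -/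
/-- Old Mathlib definition (removed since): a monoid is torsion-free if no nontrivial element has finite order. -/
def Monoid.IsTorsionFree (G : Type*) [Monoid G] : Prop :=
  ∀ g : G, g ≠ 1 → ¬IsOfFinOrder g

/-- A torsion-free group with a left-invariant metric with finite balls,
acting by isometries on a metric space, admits no non-injective equivariant map `q`
satisfying `d_Λ(a,b) ≤ L·d_X(q a, q b) + ε`. -/
theorem equivariant_coarse_embedding_injective
    {Λ : Type*} [Group Λ] [MetricSpace Λ]
    (hleft : ∀ g a b : Λ, dist (g * a) (g * b) = dist a b)
    (hballs : ∀ r : ℝ, {g : Λ | dist g (1 : Λ) ≤ r}.Finite)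
    (htf : Monoid.IsTorsionFree Λ)
    {X : Type*} [MetricSpace X] [MulAction Λ X]
    (hiso : ∀ (g : Λ) (x y : X), dist (g • x) (g • y) = dist x y)
    (q : Λ → X) (hequiv : ∀ g l : Λ, q (g * l) = g • q l)
    (L ε : ℝ) (hL : 1 ≤ L) (hε : 0 ≤ ε)
    (hq : ∀ a b : Λ, (dist a b : ℝ) ≤ L * dist (q a) (q b) + ε) :
    Function.Injective q := by
  intro a b hab
  by_contra hne
  set g := b * a⁻¹ with hg
  have hg1 : g ≠ 1 := by
    intro h
    apply hne
    have := mul_inv_eq_one.mp h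
    exact this.symm
  -- q (g^n * a) = q a for all n : ℤ
  have hga : g • q a = q a := by
    have := hequiv g a
    rw [hg, inv_mul_cancel_right] at this
    rw [← this, hab]
  have hmem : g ∈ MulAction.stabilizer Λ (q a) := hga
  have hpow : ∀ n : ℤ, (g ^ n) • q a = q a := fun n =>
    (Subgroup.zpow_mem _ hmem n : _)
  have hqn : ∀ n : ℤ, q (g ^ n * a) = q a := by
    intro n; rw [hequiv, hpow]
  -- distances bounded by ε
  have hdist : ∀ n : ℤ, dist (a⁻¹ * (g ^ n * a)) 1 ≤ ε := by
    intro n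
    have h1 : dist (a⁻¹ * (g ^ n * a)) (a⁻¹ * a) = dist (g ^ n * a) a := hleft a⁻¹ _ _
    have h2 := hq (g ^ n * a) a
    rw [hqn n, dist_self, mul_zero, zero_add] at h2
    rw [inv_mul_cancel] at h1
    linarith [h1, h2]
  -- the map n ↦ a⁻¹ * g^n * a is injective
  have hinj : Function.Injective (fun n : ℤ => a⁻¹ * (g ^ n * a)) := by
    have hzinj : Function.Injective (fun n : ℤ => g ^ n) :=
      injective_zpow_iff_not_isOfFinOrder.mpr (htf g hg1)
    intro m n h
    apply hzinj
    exact mul_right_cancel (mul_left_cancel h)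
  have : Set.Finite (Set.range (fun n : ℤ => a⁻¹ * (g ^ n * a))) :=
    (hballs ε).subset (by rintro _ ⟨n, rfl⟩; exact hdist n)
  exact Set.infinite_range_of_injective hinj this
end

section
/- Let X and Y be connected graphs, let r > 0, let r_A and R satisfy 3r < r_A and r_A + 1 ≤ R, and let H₀ be a subgroup of Isom(X). For each vertex y of Y let f_y be an isometry from the ball B_Y(y, R) onto the ball B_X(f_y(y), R). Assume that for all adjacent vertices y, z of Y there exists a ∈ H₀ such that f_y(w) = a(f_z(w)) for all w ∈ B_Y(z, r_A). Then for all vertices y, z of Y with d_Y(y, z) ≤ 2r there exists a ∈ H₀ such that f_y(w) = a(f_z(w)) for all w ∈ B_Y(z, r). -/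
namespace LGR

/-- `f` is an isometry from the ball `B_G(x, Rr)` onto the ball `B_H(y, Rr)`. -/
def IsBallIsom {V W : Type} (G : SimpleGraph V) (H : SimpleGraph W)
    (x : V) (y : W) (Rr : ℕ) (f : V → W) : Prop :=
  (∀ v, G.dist x v ≤ Rr → H.dist y (f v) ≤ Rr) ∧
  (∀ w, H.dist y w ≤ Rr → ∃ v, G.dist x v ≤ Rr ∧ f v = w) ∧
  (∀ a b, G.dist x a ≤ Rr → G.dist x b ≤ Rr → f a = f b → a = b) ∧
  (∀ a b, G.dist x a ≤ Rr → G.dist x b ≤ Rr → H.dist (f a) (f b) = G.dist a b)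

/-- `Y` is `Rr`-locally `X`: every ball of radius `Rr` in `Y` is isometric to a ball of
radius `Rr` in `X`. -/
def RLocally {W V : Type} (Y : SimpleGraph W) (X : SimpleGraph V) (Rr : ℕ) : Prop :=
  ∀ y : W, ∃ (x : V) (f : W → V), IsBallIsom Y X y x Rr f

/-- A covering of `Y` by `X`. -/
def IsCovering {V W : Type} (X : SimpleGraph V) (Y : SimpleGraph W) (p : V → W) : Prop :=
  Function.Surjective p ∧ (∀ a b, X.Adj a b → Y.Adj (p a) (p b)) ∧
  ∀ v, Set.BijOn p (X.neighborSet v) (Y.neighborSet (p v))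

/-- `X` is SLG-rigid at scale `(r, Rr)`. -/
def SLGRigidAt {V : Type} (X : SimpleGraph V) (r Rr : ℕ) : Prop :=
  ∀ (W : Type) (Y : SimpleGraph W), Y.Connected → (∀ w, (Y.neighborSet w).Finite) →
    RLocally Y X Rr →
    ∀ (x : V) (y : W) (f : V → W), IsBallIsom X Y x y Rr f →
      ∃ p : V → W, IsCovering X Y p ∧ ∀ v, X.dist x v ≤ r → p v = f v

/-- `X` is SLG-rigid. -/
def SLGRigid {V : Type} (X : SimpleGraph V) : Prop :=
  ∃ r Rr : ℕ, 0 < r ∧ r < Rr ∧ SLGRigidAt X r Rr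

/-- The isometry group of a graph: distance-preserving bijections of the vertex set. -/
def IsomGroup {V : Type} (G : SimpleGraph V) : Subgroup (Equiv.Perm V) where
  carrier := {e | ∀ a b, G.dist (e a) (e b) = G.dist a b}
  one_mem' := fun _ _ => rfl
  mul_mem' := by
    intro e f he hf a b
    simpa [Equiv.Perm.mul_apply] using (he (f a) (f b)).trans (hf a b)
  inv_mem' := by
    intro e he a b
    have h := he (e⁻¹ a) (e⁻¹ b)
    simpa using h.symm

/-- Quasi-isometries between graphs. -/
def IsQuasiIsometry {V W : Type} (G : SimpleGraph V) (H : SimpleGraph W) (q : V → W) : Prop :=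
  ∃ L ε : ℝ, 1 ≤ L ∧ 0 ≤ ε ∧
    (∀ a b : V, L⁻¹ * (G.dist a b : ℝ) - ε ≤ (H.dist (q a) (q b) : ℝ) ∧
       (H.dist (q a) (q b) : ℝ) ≤ L * (G.dist a b : ℝ) + ε) ∧
    (∀ w : W, ∃ a : V, (H.dist (q a) w : ℝ) ≤ ε)

/-- The Cayley graph of a group with respect to a symmetric generating set. -/
def cayley (G : Type) [Group G] (S : Set G) (hSsym : ∀ s ∈ S, s⁻¹ ∈ S) (hS1 : (1 : G) ∉ S) :
    SimpleGraph G where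
  Adj a b := a⁻¹ * b ∈ S
  symm := by
    constructor
    intro a b h
    have := hSsym _ h
    simpa [mul_inv_rev] using this
  loopless := by
    constructor
    intro a h
    simp only [inv_mul_cancel] at h
    exact hS1 h

/-- If an atlas of ball isometries from `Y` to `X` has transition maps in
`H₀` for neighbouring centers (at radius `r_A`), then it has transition maps in `H₀` for
centers at distance at most `2r` (at radius `r`), provided `3r < r_A` and `r_A + 1 ≤ R`. -/
theorem atlas_transition_maps
    {V W : Type} (X : SimpleGraph V) (Y : SimpleGraph W)
    (hX : X.Connected) (hY : Y.Connected)
    (r rA Rr : ℕ) (hr : 0 < r) (hrA : 3 * r < rA) (hR : rA + 1 ≤ Rr)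
    (H₀ : Subgroup (Equiv.Perm V)) (hH₀ : H₀ ≤ IsomGroup X)
    (f : W → W → V)
    (hf : ∀ y : W, IsBallIsom Y X y (f y y) Rr (f y))
    (hadj : ∀ y z : W, Y.Adj y z →
      ∃ a ∈ H₀, ∀ w : W, Y.dist z w ≤ rA → f y w = (a : Equiv.Perm V) (f z w)) :
    ∀ y z : W, Y.dist y z ≤ 2 * r →
      ∃ a ∈ H₀, ∀ w : W, Y.dist z w ≤ r → f y w = (a : Equiv.Perm V) (f z w) := by
  suffices key : ∀ n : ℕ, n ≤ 2 * r → ∀ y z : W, Y.dist y z ≤ n →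
      ∃ a ∈ H₀, ∀ w : W, Y.dist z w ≤ r → f y w = (a : Equiv.Perm V) (f z w) by
    intro y z hyz
    exact key (2 * r) le_rfl y z hyz
  intro n
  induction n with
  | zero =>
    intro _ y z hyz
    have : y = z := (hY.dist_eq_zero_iff).mp (Nat.le_zero.mp hyz)
    subst this
    exact ⟨1, one_mem H₀, fun w _ => rfl⟩
  | succ n ih =>
    intro hn y z hyz
    by_cases hle : Y.dist y z ≤ n
    · exact ih (le_trans (Nat.le_succ n) hn) y z hle
    · have hdist : Y.dist y z = n + 1 := le_antisymm hyz (Nat.succ_le_of_lt (Nat.lt_of_not_le hle))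
      obtain ⟨p, hp⟩ := hY.exists_walk_length_eq_dist y z
      cases p with
      | nil => simp at hdist
      | cons h q =>
        rename_i b
        have hq : Y.dist b z ≤ n := by
          have := SimpleGraph.dist_le q
          simp [SimpleGraph.Walk.length_cons, hdist] at hp
          omega
        obtain ⟨a₂, ha₂mem, ha₂⟩ := ih (le_trans (Nat.le_succ n) hn) b z hq
        obtain ⟨a₁, ha₁mem, ha₁⟩ := hadj y b h
        refine ⟨a₁ * a₂, mul_mem ha₁mem ha₂mem, fun w hw => ?_⟩
        have hbw : Y.dist b w ≤ rA := by
          have := hY.dist_triangle (u := b) (v := z) (w := w)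
          omega
        rw [ha₁ w hbw, ha₂ w hw]
        rfl

end LGR
end
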